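/- Let H be a complex Hilbert space, A a positive bounded operator, T, S bounded operators admitting A-adjoints, with α ∈ [0,1] and β ≥ 0. Then w_A(S^♯T)⁴ ≤ ((1+α+2β)/(8(1+β))) ‖(T^♯T)² + (S^♯S)²‖_A² + ((1−α)/(2(1+β))) w_A(S^♯S·T^♯T)². -/

import Mathlib

open scoped InnerProductSpace

variable {H : Type*} [NormedAddCommGroup H] [InnerProductSpace ℂ H] [CompleteSpace H]

/-- The `A`-semi-inner product `⟪x, y⟫_A = ⟪A x, y⟫`. -/
noncomputable def ipA (A : H →L[ℂ] H) (x y : H) : ℂ := ⟪A x, y⟫_ℂ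

/-- The `A`-semi-norm `‖x‖_A = √(re ⟪A x, x⟫)`. -/
noncomputable def nA (A : H →L[ℂ] H) (x : H) : ℝ := Real.sqrt (ipA A x x).re

set_option maxHeartbeats 1000000
open Complex

section Aux
variable {A : H →L[ℂ] H}

lemma ipA_conj (hA : A.IsPositive) (x y : H) :
    ipA A x y = starRingEnd ℂ (ipA A y x) := by
  unfold ipA
  rw [← inner_conj_symm]
  congr 1
  exact (hA.isSelfAdjoint.isSymmetric y x).symm

lemma ipA_re_nonneg (hA : A.IsPositive) (x : H) : 0 ≤ (ipA A x x).re := by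
  have := hA.inner_nonneg_left x
  simpa [ipA] using (Complex.le_def.mp this).1

noncomputable def core (A : H →L[ℂ] H) (hA : A.IsPositive) :
    PreInnerProductSpace.Core ℂ H where
  inner x y := ipA A x y
  conj_inner_symm x y := (ipA_conj hA x y).symm
  re_inner_nonneg x := by simpa using ipA_re_nonneg hA x
  add_left x y z := by simp [ipA, inner_add_left]
  smul_left x y r := by simp [ipA, inner_smul_left, mul_comm]

lemma nA_nonneg (x : H) : 0 ≤ nA A x := Real.sqrt_nonneg _

lemma nA_sq (hA : A.IsPositive) (x : H) : nA A x ^ 2 = (ipA A x x).re := by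
  rw [nA, Real.sq_sqrt (ipA_re_nonneg hA x)]

lemma ipA_cs (hA : A.IsPositive) (x y : H) :
    ‖ipA A x y‖ ≤ nA A x * nA A y := by
  have h := InnerProductSpace.Core.inner_mul_inner_self_le (c := core A hA) x y
  have h2 : ‖ipA A x y‖ * ‖ipA A y x‖ ≤ (ipA A x x).re * (ipA A y y).re := by
    exact h
  have h3 : ‖ipA A y x‖ = ‖ipA A x y‖ := by
    rw [ipA_conj hA y x]; simp
  rw [h3] at h2
  have h4 : ‖ipA A x y‖ ^ 2 ≤ (nA A x * nA A y) ^ 2 := by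
    rw [mul_pow, nA_sq hA, nA_sq hA]
    simpa [sq] using h2
  have := abs_le_abs (a := ‖ipA A x y‖) (b := nA A x * nA A y)
  nlinarith [norm_nonneg (ipA A x y),
    mul_nonneg (nA_nonneg (A := A) x) (nA_nonneg (A := A) y)]

lemma ipA_real (hA : A.IsPositive) (x : H) :
    ipA A x x = ((ipA A x x).re : ℂ) := by
  have h := ipA_conj hA x x
  have him : (ipA A x x).im = 0 := by
    have := congrArg Complex.im h
    simp at this
    linarith
  exact Complex.ext (by simp) (by simp [him])

lemma nA_le (hA : A.IsPositive) (y : H) : nA A y ≤ Real.sqrt ‖A‖ * ‖y‖ := by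
  have h1 : (ipA A y y).re ≤ ‖A‖ * ‖y‖ ^ 2 := by
    have h2 : (ipA A y y).re ≤ ‖ipA A y y‖ := Complex.re_le_norm _
    have h3 : ‖ipA A y y‖ ≤ ‖A y‖ * ‖y‖ := by
      exact (norm_inner_le_norm _ _)
    have h4 : ‖A y‖ * ‖y‖ ≤ ‖A‖ * ‖y‖ ^ 2 := by
      have := A.le_opNorm y
      nlinarith [norm_nonneg y, norm_nonneg (A y)]
    linarith
  calc nA A y ≤ Real.sqrt (‖A‖ * ‖y‖ ^ 2) := Real.sqrt_le_sqrt h1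
    _ = Real.sqrt ‖A‖ * ‖y‖ := by
        rw [Real.sqrt_mul (norm_nonneg A), Real.sqrt_sq (norm_nonneg y)]

lemma nA_apply_le_opNorm (hA : A.IsPositive) {B : H →L[ℂ] H}
    (hB : ∀ x y : H, ipA A (B x) y = ipA A x (B y)) {x : H} (hx : nA A x = 1) :
    nA A (B x) ≤ ‖B‖ := by
  by_contra hlt
  push_neg at hlt
  have hBpow : ∀ (k : ℕ) (u v : H), ipA A ((B ^ k) u) v = ipA A u ((B ^ k) v) := by
    intro k
    induction k with
    | zero => intro u v; simp
    | succ k ih =>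
        intro u v
        have e1 : ∀ z : H, (B ^ (k + 1)) z = (B ^ k) (B z) := fun z => by
          rw [pow_succ]; rfl
        have e2 : ∀ z : H, (B ^ (k + 1)) z = B ((B ^ k) z) := fun z => by
          rw [pow_succ']; rfl
        rw [e1 u, ih, hB, ← e2 v]
  have step : ∀ k : ℕ, nA A ((B ^ k) x) ^ 2 ≤ nA A ((B ^ (k + k)) x) := by
    intro k
    have h2 : ipA A ((B ^ (k + k)) x) x = ipA A ((B ^ k) x) ((B ^ k) x) := by
      rw [pow_add, ContinuousLinearMap.mul_apply, hBpow k ((B ^ k) x) x]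
    have h3 : nA A ((B ^ k) x) ^ 2 = (ipA A ((B ^ (k + k)) x) x).re := by
      rw [nA_sq hA, h2]
    rw [h3]
    calc (ipA A ((B ^ (k + k)) x) x).re ≤ ‖ipA A ((B ^ (k + k)) x) x‖ :=
        Complex.re_le_norm _
      _ ≤ nA A ((B ^ (k + k)) x) * nA A x := ipA_cs hA _ _
      _ = nA A ((B ^ (k + k)) x) := by rw [hx, mul_one]
  have grow : ∀ n : ℕ, nA A (B x) ^ (2 ^ n) ≤ nA A ((B ^ (2 ^ n)) x) := by
    intro n
    induction n with
    | zero => simp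
    | succ n ih =>
        have h1 : nA A (B x) ^ (2 ^ (n + 1)) = (nA A (B x) ^ (2 ^ n)) ^ 2 := by
          rw [← pow_mul, pow_succ]
        have h2 : (nA A (B x) ^ (2 ^ n)) ^ 2 ≤ (nA A ((B ^ (2 ^ n)) x)) ^ 2 :=
          pow_le_pow_left₀ (pow_nonneg (nA_nonneg _) _) ih 2
        have h3 : (2 : ℕ) ^ (n + 1) = 2 ^ n + 2 ^ n := by ring
        rw [h1, h3]
        exact le_trans h2 (step (2 ^ n))
  have upper : ∀ n : ℕ, nA A ((B ^ (2 ^ n)) x) ≤ Real.sqrt ‖A‖ * ‖x‖ * ‖B‖ ^ (2 ^ n) := by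
    intro n
    have h1 : ‖(B ^ (2 ^ n)) x‖ ≤ ‖B‖ ^ (2 ^ n) * ‖x‖ := by
      refine le_trans (ContinuousLinearMap.le_opNorm _ _) ?_
      have h2 : ‖B ^ (2 ^ n)‖ ≤ ‖B‖ ^ (2 ^ n) := norm_pow_le' B (by positivity)
      exact mul_le_mul_of_nonneg_right h2 (norm_nonneg x)
    have h3 := nA_le hA ((B ^ (2 ^ n)) x)
    have h4 : Real.sqrt ‖A‖ * ‖(B ^ (2 ^ n)) x‖ ≤ Real.sqrt ‖A‖ * (‖B‖ ^ (2 ^ n) * ‖x‖) :=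
      mul_le_mul_of_nonneg_left h1 (Real.sqrt_nonneg _)
    have h5 : Real.sqrt ‖A‖ * (‖B‖ ^ (2 ^ n) * ‖x‖) = Real.sqrt ‖A‖ * ‖x‖ * ‖B‖ ^ (2 ^ n) := by
      ring
    linarith
  rcases eq_or_lt_of_le (norm_nonneg B) with hB0 | hB0
  · exfalso
    have hB' : B = 0 := by rwa [eq_comm, norm_eq_zero] at hB0
    have h0 : nA A (B x) = 0 := by simp [hB', nA, ipA]
    rw [h0] at hlt
    linarith [norm_nonneg B]
  · set r : ℝ := nA A (B x) / ‖B‖ with hr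
    have hr1 : 1 < r := (one_lt_div hB0).2 hlt
    set K : ℝ := Real.sqrt ‖A‖ * ‖x‖ with hK
    have hrn : ∀ n : ℕ, r ^ (2 ^ n) ≤ K := by
      intro n
      have h1 := le_trans (grow n) (upper n)
      rw [hr, div_pow]
      rw [div_le_iff₀ (by positivity)]
      exact h1
    obtain ⟨n, hn⟩ := exists_nat_gt ((K - 1) / (r - 1))
    have h2 : (K - 1) < n * (r - 1) := by
      rw [div_lt_iff₀ (by linarith)] at hn
      linarith
    have h3 : (n : ℝ) ≤ ((2 ^ n : ℕ) : ℝ) := by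
      exact_mod_cast Nat.le_of_lt (Nat.lt_two_pow_self)
    have h4 : 1 + ((2 ^ n : ℕ) : ℝ) * (r - 1) ≤ r ^ (2 ^ n) := by
      have := one_add_mul_le_pow (a := r - 1) (by linarith) (2 ^ n)
      simpa using this
    have h5 := hrn n
    nlinarith

lemma buzano (hA : A.IsPositive) {e : H} (he : nA A e = 1) (a b : H) :
    2 * (‖ipA A a e‖ * ‖ipA A e b‖) ≤
      nA A a * nA A b + ‖ipA A a b‖ := by
  set c := ipA A e b with hc
  have hee : ipA A e e = 1 := by
    rw [ipA_real hA e]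
    have : (ipA A e e).re = 1 := by
      have := nA_sq hA e
      rw [he] at this
      simpa using this.symm
    rw [this]; norm_num
  have hbe : ipA A b e = starRingEnd ℂ c := ipA_conj hA b e
  set w := (2 * c) • e - b with hw
  have hww : ipA A w w = ipA A b b := by
    simp only [hw, ipA, map_sub, map_smul, inner_sub_left, inner_sub_right,
      inner_smul_left, inner_smul_right]
    have h1 : (⟪A e, e⟫_ℂ : ℂ) = 1 := hee
    have h2 : (⟪A b, e⟫_ℂ : ℂ) = starRingEnd ℂ c := hbe
    have h3 : (⟪A e, b⟫_ℂ : ℂ) = c := hc.symm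
    rw [h1, h2, h3]
    simp only [map_mul, map_ofNat]
    ring
  have hnw : nA A w = nA A b := by unfold nA; rw [hww]
  have hexp : ipA A a w = 2 * c * ipA A a e - ipA A a b := by
    simp only [hw, ipA, inner_sub_right, inner_smul_right]
  have hcs := ipA_cs hA a w
  rw [hexp, hnw] at hcs
  have htri : ‖2 * c * ipA A a e‖ - ‖ipA A a b‖ ≤
      ‖2 * c * ipA A a e - ipA A a b‖ := by
    simpa using
      norm_sub_norm_le (2 * c * ipA A a e) (ipA A a b)
  have habs : ‖2 * c * ipA A a e‖ =
      2 * (‖ipA A a e‖ * ‖c‖) := by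
    simp only [norm_mul, Complex.norm_ofNat]
    ring
  rw [habs] at htri
  linarith

end Aux

/-- The `A`-numerical radius. -/
noncomputable def wA (A T : H →L[ℂ] H) : ℝ :=
  sSup {c : ℝ | ∃ x : H, nA A x = 1 ∧ c = ‖ipA A (T x) x‖}

/-- The `A`-operator seminorm. -/
noncomputable def opA (A T : H →L[ℂ] H) : ℝ :=
  sSup {c : ℝ | ∃ x : H, nA A x = 1 ∧ c = nA A (T x)}

theorem stmt17 (A : H →L[ℂ] H) (hA : A.IsPositive) (T Ts S Ss : H →L[ℂ] H)
    (hadjT : ∀ x y : H, ipA A (T x) y = ipA A x (Ts y))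
    (hadjS : ∀ x y : H, ipA A (S x) y = ipA A x (Ss y))
    (α β : ℝ) (hα : α ∈ Set.Icc (0 : ℝ) 1) (hβ : 0 ≤ β) :
    wA A (Ss ∘L T) ^ 4 ≤
      ((1 + α + 2 * β) / (8 * (1 + β))) *
          opA A ((Ts ∘L T) ∘L (Ts ∘L T) + (Ss ∘L S) ∘L (Ss ∘L S)) ^ 2 +
        ((1 - α) / (2 * (1 + β))) * wA A ((Ss ∘L S) ∘L (Ts ∘L T)) ^ 2 := by
  obtain ⟨hα0, hα1⟩ := hα
  have hβ1 : (0:ℝ) < 1 + β := by linarith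
  set M := Ts ∘L T with hMdef
  set Z := Ss ∘L S with hZdef
  set N := M ∘L M + Z ∘L Z with hNdef
  set Wop := Z ∘L M with hWdef
  -- derived adjoint relations
  have hadjTs : ∀ x y : H, ipA A (Ts x) y = ipA A x (T y) := by
    intro x y
    rw [ipA_conj hA (Ts x) y, ← hadjT y x, ← ipA_conj hA x (T y)]
  have hadjSs : ∀ x y : H, ipA A (Ss x) y = ipA A x (S y) := by
    intro x y
    rw [ipA_conj hA (Ss x) y, ← hadjS y x, ← ipA_conj hA x (S y)]
  have hM : ∀ x y : H, ipA A (M x) y = ipA A x (M y) := by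
    intro x y
    show ipA A (Ts (T x)) y = ipA A x (Ts (T y))
    rw [hadjTs, hadjT]
  have hZ : ∀ x y : H, ipA A (Z x) y = ipA A x (Z y) := by
    intro x y
    show ipA A (Ss (S x)) y = ipA A x (Ss (S y))
    rw [hadjSs, hadjS]
  have hN : ∀ x y : H, ipA A (N x) y = ipA A x (N y) := by
    intro x y
    have h1 : ipA A (M (M x)) y = ipA A x (M (M y)) :=
      (hM (M x) y).trans (hM x (M y))
    have h2 : ipA A (Z (Z x)) y = ipA A x (Z (Z y)) :=
      (hZ (Z x) y).trans (hZ x (Z y))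
    have hNx : ∀ z : H, N z = M (M z) + Z (Z z) := fun z => rfl
    rw [hNx x, hNx y]
    calc ipA A (M (M x) + Z (Z x)) y
        = ipA A (M (M x)) y + ipA A (Z (Z x)) y := by simp [ipA, inner_add_left]
      _ = ipA A x (M (M y)) + ipA A x (Z (Z y)) := by rw [h1, h2]
      _ = ipA A x (M (M y) + Z (Z y)) := by simp [ipA, inner_add_right]
  have hW : ∀ x : H, ipA A (Wop x) x = ipA A (M x) (Z x) := by
    intro x
    show ipA A (Z (M x)) x = ipA A (M x) (Z x)
    rw [hZ]
  -- boundedness and membership facts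
  have hNset : BddAbove {c : ℝ | ∃ x : H, nA A x = 1 ∧ c = nA A (N x)} := by
    refine ⟨‖N‖, ?_⟩
    rintro c ⟨x, hx, rfl⟩
    exact nA_apply_le_opNorm hA hN hx
  have hsum_le : ∀ x : H, nA A x = 1 → nA A (M x) ^ 2 + nA A (Z x) ^ 2 ≤ opA A N := by
    intro x hx
    have h1 : ipA A (N x) x = ipA A (M x) (M x) + ipA A (Z x) (Z x) := by
      have h0 : N x = M (M x) + Z (Z x) := rfl
      rw [h0]
      have h2 : ipA A (M (M x) + Z (Z x)) x = ipA A (M (M x)) x + ipA A (Z (Z x)) x := by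
        simp [ipA, inner_add_left]
      rw [h2, hM (M x) x, hZ (Z x) x]
    have h2 : nA A (M x) ^ 2 + nA A (Z x) ^ 2 = (ipA A (N x) x).re := by
      rw [nA_sq hA, nA_sq hA, h1, Complex.add_re]
    rw [h2]
    have h3 : (ipA A (N x) x).re ≤ ‖ipA A (N x) x‖ := Complex.re_le_norm _
    have h4 : ‖ipA A (N x) x‖ ≤ nA A (N x) * nA A x := ipA_cs hA _ _
    rw [hx, mul_one] at h4
    have h5 : nA A (N x) ≤ opA A N := le_csSup hNset ⟨x, hx, rfl⟩
    calc (ipA A (N x) x).re ≤ nA A (N x) := le_trans h3 h4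
      _ ≤ opA A N := h5
  have hWset : BddAbove {c : ℝ | ∃ x : H, nA A x = 1 ∧ c = ‖ipA A (Wop x) x‖} := by
    refine ⟨‖M‖ * ‖Z‖, ?_⟩
    rintro c ⟨x, hx, rfl⟩
    rw [hW x]
    calc ‖ipA A (M x) (Z x)‖ ≤ nA A (M x) * nA A (Z x) := ipA_cs hA _ _
      _ ≤ ‖M‖ * ‖Z‖ := by
          have h1 := nA_apply_le_opNorm hA hM hx
          have h2 := nA_apply_le_opNorm hA hZ hx
          exact mul_le_mul h1 h2 (nA_nonneg _) (norm_nonneg _)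
  have hvW : ∀ x : H, nA A x = 1 → ‖ipA A (M x) (Z x)‖ ≤ wA A Wop := by
    intro x hx
    exact le_csSup hWset ⟨x, hx, by rw [hW x]⟩
  have hwW_nonneg : 0 ≤ wA A Wop :=
    Real.sSup_nonneg (by rintro c ⟨x, hx, rfl⟩; exact norm_nonneg _)
  have hopN_nonneg : 0 ≤ opA A N :=
    Real.sSup_nonneg (by rintro c ⟨x, hx, rfl⟩; exact nA_nonneg _)
  have hwSsT_nonneg : 0 ≤ wA A (Ss ∘L T) :=
    Real.sSup_nonneg (by rintro c ⟨x, hx, rfl⟩; exact norm_nonneg _)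
  set C : ℝ := (1 + α + 2 * β) / (8 * (1 + β)) * opA A N ^ 2 +
      (1 - α) / (2 * (1 + β)) * wA A Wop ^ 2 with hCdef
  have hC0 : 0 ≤ C := by
    apply add_nonneg
    · exact mul_nonneg (div_nonneg (by linarith) (by linarith)) (sq_nonneg _)
    · exact mul_nonneg (div_nonneg (by linarith) (by linarith)) (sq_nonneg _)
  -- pointwise bound
  have hpoint : ∀ x : H, nA A x = 1 → ‖ipA A ((Ss ∘L T) x) x‖ ^ 4 ≤ C := by
    intro x hx
    have e1 : ipA A ((Ss ∘L T) x) x = ipA A (T x) (S x) := by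
      show ipA A (Ss (T x)) x = _
      rw [hadjSs]
    set p : ℝ := (ipA A (M x) x).re with hp
    set q : ℝ := (ipA A (Z x) x).re with hq
    have hpTx : p = nA A (T x) ^ 2 := by
      rw [nA_sq hA]
      have h0 : ipA A (M x) x = ipA A (T x) (T x) := by
        show ipA A (Ts (T x)) x = _
        rw [hadjTs]
      rw [hp, h0]
    have hqSx : q = nA A (S x) ^ 2 := by
      rw [nA_sq hA]
      have h0 : ipA A (Z x) x = ipA A (S x) (S x) := by
        show ipA A (Ss (S x)) x = _
        rw [hadjSs]
      rw [hq, h0]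
    have hp0 : 0 ≤ p := by rw [hpTx]; exact sq_nonneg _
    have hq0 : 0 ≤ q := by rw [hqSx]; exact sq_nonneg _
    have step1 : ‖ipA A ((Ss ∘L T) x) x‖ ^ 2 ≤ p * q := by
      rw [e1, hpTx, hqSx]
      have h1 := ipA_cs hA (T x) (S x)
      nlinarith [norm_nonneg (ipA A (T x) (S x)),
        nA_nonneg (A := A) (T x), nA_nonneg (A := A) (S x)]
    have hMreal : ipA A (M x) x = ((ipA A (M x) x).re : ℂ) := by
      have h1 : ipA A (M x) x = starRingEnd ℂ (ipA A (M x) x) :=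
        (ipA_conj hA (M x) x).trans (congrArg (starRingEnd ℂ) (hM x x).symm)
      have him : (ipA A (M x) x).im = 0 := by
        have := congrArg Complex.im h1
        simp at this
        linarith
      exact Complex.ext (by simp) (by simp [him])
    have hZreal : ipA A (Z x) x = ((ipA A (Z x) x).re : ℂ) := by
      have h1 : ipA A (Z x) x = starRingEnd ℂ (ipA A (Z x) x) :=
        (ipA_conj hA (Z x) x).trans (congrArg (starRingEnd ℂ) (hZ x x).symm)
      have him : (ipA A (Z x) x).im = 0 := by
        have := congrArg Complex.im h1
        simp at this
        linarith
      exact Complex.ext (by simp) (by simp [him])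
    have hpabs : p = ‖ipA A (M x) x‖ := by
      rw [hp]
      nth_rewrite 2 [hMreal]
      rw [Complex.norm_real, Real.norm_eq_abs, _root_.abs_of_nonneg hp0]
    have hqabs : q = ‖ipA A x (Z x)‖ := by
      have h1 : ‖ipA A x (Z x)‖ = ‖ipA A (Z x) x‖ := by
        rw [ipA_conj hA x (Z x)]
        exact Complex.norm_conj _
      rw [h1, hq]
      nth_rewrite 2 [hZreal]
      rw [Complex.norm_real, Real.norm_eq_abs, _root_.abs_of_nonneg hq0]
    set n2 : ℝ := nA A (M x) * nA A (Z x) with hn2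
    set v : ℝ := ‖ipA A (M x) (Z x)‖ with hv
    have hbz := buzano hA hx (M x) (Z x)
    have hpq : 2 * (p * q) ≤ n2 + v := by
      rw [hpabs, hqabs]
      exact hbz
    have hv0 : 0 ≤ v := norm_nonneg _
    have hvn : v ≤ n2 := ipA_cs hA (M x) (Z x)
    have hn20 : 0 ≤ n2 := mul_nonneg (nA_nonneg _) (nA_nonneg _)
    have hn2le : 2 * n2 ≤ opA A N := by
      have h1 := hsum_le x hx
      nlinarith [sq_nonneg (nA A (M x) - nA A (Z x))]
    have hvw : v ≤ wA A Wop := hvW x hx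
    -- arithmetic chain
    have key2 : (p * q) ^ 2 ≤ ((n2 + v) / 2) ^ 2 := by
      nlinarith [mul_nonneg hp0 hq0]
    have key3 : ((n2 + v) / 2) ^ 2 ≤
        (1 + α + 2 * β) / (2 * (1 + β)) * n2 ^ 2 + (1 - α) / (2 * (1 + β)) * v ^ 2 := by
      rw [div_mul_eq_mul_div, div_mul_eq_mul_div, ← add_div, le_div_iff₀ (by linarith)]
      nlinarith [mul_nonneg (add_nonneg hα0 hβ) (mul_nonneg (by linarith : (0:ℝ) ≤ n2 - v)
        (by linarith : (0:ℝ) ≤ n2 + v)), mul_nonneg hβ (sq_nonneg (n2 - v)), sq_nonneg (n2 - v)]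
    have key4 : (1 + α + 2 * β) / (2 * (1 + β)) * n2 ^ 2 + (1 - α) / (2 * (1 + β)) * v ^ 2 ≤ C := by
      rw [hCdef]
      have h1 : n2 ^ 2 ≤ opA A N ^ 2 / 4 := by nlinarith
      have h2 : v ^ 2 ≤ wA A Wop ^ 2 := by nlinarith
      have hc1 : 0 ≤ (1 + α + 2 * β) / (2 * (1 + β)) := div_nonneg (by linarith) (by linarith)
      have hc2 : 0 ≤ (1 - α) / (2 * (1 + β)) := div_nonneg (by linarith) (by linarith)
      have h3 : (1 + α + 2 * β) / (2 * (1 + β)) * (opA A N ^ 2 / 4) =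
          (1 + α + 2 * β) / (8 * (1 + β)) * opA A N ^ 2 := by
        rw [div_mul_div_comm, div_mul_eq_mul_div]
        congr 1
        ring
      nlinarith [mul_le_mul_of_nonneg_left h1 hc1, mul_le_mul_of_nonneg_left h2 hc2]
    have habs0 : 0 ≤ ‖ipA A ((Ss ∘L T) x) x‖ := norm_nonneg _
    calc ‖ipA A ((Ss ∘L T) x) x‖ ^ 4
        = (‖ipA A ((Ss ∘L T) x) x‖ ^ 2) ^ 2 := by ring
      _ ≤ (p * q) ^ 2 := by
          apply pow_le_pow_left₀ (sq_nonneg _) step1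
      _ ≤ ((n2 + v) / 2) ^ 2 := key2
      _ ≤ _ := key3
      _ ≤ C := key4
  -- conclude
  have hfinal : wA A (Ss ∘L T) ≤ Real.sqrt (Real.sqrt C) := by
    apply Real.sSup_le _ (Real.sqrt_nonneg _)
    rintro c ⟨x, hx, rfl⟩
    have hc4 := hpoint x hx
    have hc0 : 0 ≤ ‖ipA A ((Ss ∘L T) x) x‖ := norm_nonneg _
    rw [Real.le_sqrt hc0 (Real.sqrt_nonneg _)]
    rw [Real.le_sqrt (sq_nonneg _) hC0]
    calc (‖ipA A ((Ss ∘L T) x) x‖ ^ 2) ^ 2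
        = ‖ipA A ((Ss ∘L T) x) x‖ ^ 4 := by ring
      _ ≤ C := hc4
  have h2 : wA A (Ss ∘L T) ^ 4 ≤ Real.sqrt (Real.sqrt C) ^ 4 :=
    pow_le_pow_left₀ hwSsT_nonneg hfinal 4
  have h3 : Real.sqrt (Real.sqrt C) ^ 4 = C := by
    have : Real.sqrt (Real.sqrt C) ^ 4 = (Real.sqrt (Real.sqrt C) ^ 2) ^ 2 := by ring
    rw [this, Real.sq_sqrt (Real.sqrt_nonneg C), Real.sq_sqrt hC0]
  linarith
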